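/- If each block subproblem of a separable objective f(θ¹,…,θ^d) = g(θ¹,…,θ^d) + ∑_t h_t(θ^t), where g is continuously differentiable and convex and each h_t is convex (possibly nondifferentiable), attains a unique minimum, then any accumulation point of the cyclic block coordinate descent iterates is a coordinatewise minimum: at the accumulation point θ*, for each block t, θ*^t minimizes f over θ^t with all other blocks fixed at θ*. -/

import Mathlib

open Filter Topology

private lemma bcd_update_comb {d q : ℕ} (θ : Fin d → Fin q → ℝ) (t : Fin d)
    (x y : Fin q → ℝ) {a b : ℝ} (hab : a + b = 1) :
    Function.update θ t (a • x + b • y)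
      = a • Function.update θ t x + b • Function.update θ t y := by
  funext s
  by_cases hs : s = t
  · subst hs; simp
  · simp only [Function.update_of_ne hs, Pi.add_apply, Pi.smul_apply, ← add_smul, hab, one_smul]

private lemma bcd_continuous_update {d q : ℕ} (t : Fin d) :
    Continuous (fun p : (Fin d → Fin q → ℝ) × (Fin q → ℝ) => Function.update p.1 t p.2) := by
  refine continuous_pi fun s => ?_
  by_cases hs : s = t
  · subst hs
    simp only [Function.update_self]
    exact continuous_snd
  · simp only [Function.update_of_ne hs]
    exact (continuous_apply s).comp continuous_fst

private lemma bcd_mod_arith (a t d : ℕ) (hd : 0 < d) (ht : t < d) :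
    (a + (t + d - a % d) % d) % d = t := by
  have h1 : a % d ≤ t + d := le_of_lt (lt_of_lt_of_le (Nat.mod_lt a hd) (Nat.le_add_left d t))
  have c1 : a + (t + d - a % d) % d ≡ a % d + (t + d - a % d) [MOD d] :=
    Nat.ModEq.add (Nat.mod_modEq a d).symm (Nat.mod_modEq _ d)
  rw [Nat.add_sub_cancel' h1] at c1
  have c2 : (t + d) ≡ t [MOD d] := by
    show (t + d) % d = t % d
    exact Nat.add_mod_right t d
  have c3 : (a + (t + d - a % d) % d) % d = t % d := c1.trans c2
  rw [c3, Nat.mod_eq_of_lt ht]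

private lemma bcd_convexOn_sum {d q : ℕ} {ι : Type*} (s : Finset ι)
    (F : ι → (Fin d → Fin q → ℝ) → ℝ) (hF : ∀ i ∈ s, ConvexOn ℝ Set.univ (F i)) :
    ConvexOn ℝ Set.univ (fun x => ∑ i ∈ s, F i x) := by
  classical
  induction s using Finset.induction with
  | empty => simpa using convexOn_const (0 : ℝ) convex_univ
  | insert _ _ hnotmem ih =>
    rename_i a s'
    simp only [Finset.sum_insert hnotmem]
    exact (hF a (Finset.mem_insert_self a s')).add
      (ih fun i hi => hF i (Finset.mem_insert_of_mem hi))

private lemma bcd_pigeon {d : ℕ} (hd : 0 < d) (c : ℕ → Fin d) :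
    ∃ r : Fin d, ∃ᶠ n in atTop, c n = r := by
  by_contra hc
  push_neg at hc
  have hev : ∀ᶠ n in atTop, ∀ r : Fin d, c n ≠ r := by
    rw [Filter.eventually_all]
    exact fun r => hc r
  obtain ⟨n, hn⟩ := hev.exists
  exact hn (c n) rfl

/-- Tseng-type result for cyclic block coordinate descent on a separable
objective `f(θ) = g(θ) + ∑ t, h t (θ t)` with `g` convex and continuously
differentiable and each `h t` convex: if every block subproblem attains a
unique minimum, then any accumulation point of the cyclic BCD iterates is a
coordinatewise minimum of `f`. -/
theorem bcd_accumulation_point_coordinatewise_min {d q : ℕ} (hd : 0 < d)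
    (g : (Fin d → (Fin q → ℝ)) → ℝ)
    (hg_smooth : ContDiff ℝ 1 g) (hg_convex : ConvexOn ℝ Set.univ g)
    (h : Fin d → (Fin q → ℝ) → ℝ) (hh_convex : ∀ t, ConvexOn ℝ Set.univ (h t))
    (f : (Fin d → (Fin q → ℝ)) → ℝ)
    (hf : f = fun θ => g θ + ∑ t, h t (θ t))
    (huniq : ∀ (θ : Fin d → (Fin q → ℝ)) (t : Fin d),
      ∃! v : Fin q → ℝ, ∀ u : Fin q → ℝ,
        f (Function.update θ t v) ≤ f (Function.update θ t u))
    (θseq : ℕ → Fin d → (Fin q → ℝ))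
    (hstep : ∀ k : ℕ,
      θseq (k + 1) = Function.update (θseq k) ⟨k % d, Nat.mod_lt k hd⟩
        (θseq (k + 1) ⟨k % d, Nat.mod_lt k hd⟩) ∧
      ∀ u : Fin q → ℝ, f (θseq (k + 1))
        ≤ f (Function.update (θseq k) ⟨k % d, Nat.mod_lt k hd⟩ u))
    (θstar : Fin d → (Fin q → ℝ)) (φ : ℕ → ℕ) (hφ : StrictMono φ)
    (hacc : Filter.Tendsto (fun k => θseq (φ k)) Filter.atTop (nhds θstar)) :
    ∀ (t : Fin d) (v : Fin q → ℝ), f θstar ≤ f (Function.update θstar t v) := by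
  classical
  -- continuity of f
  have hhcont : ∀ t', Continuous (h t') := fun t' =>
    continuousOn_univ.mp ((hh_convex t').continuousOn isOpen_univ)
  have hf_cont : Continuous f := by
    rw [hf]
    exact (hg_smooth.continuous).add
      (continuous_finset_sum _ fun t' _ => (hhcont t').comp (continuous_apply t'))
  -- convexity of f
  have hf_conv : ConvexOn ℝ Set.univ f := by
    rw [hf]
    refine hg_convex.add (bcd_convexOn_sum Finset.univ (fun t' θ => h t' (θ t')) ?_)
    intro t' _
    have := (hh_convex t').comp_linearMap
      (LinearMap.proj (R := ℝ) (φ := fun _ : Fin d => (Fin q → ℝ)) t')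
    exact this
  -- monotone decrease of the objective and its limit
  have hdec : ∀ k, f (θseq (k + 1)) ≤ f (θseq k) := by
    intro k
    have h2 := (hstep k).2 (θseq k ⟨k % d, Nat.mod_lt k hd⟩)
    rwa [Function.update_eq_self] at h2
  have hant : Antitone (fun k => f (θseq k)) := antitone_nat_of_succ_le hdec
  have husub : Tendsto (fun m => f (θseq (φ m))) atTop (nhds (f θstar)) :=
    (hf_cont.tendsto θstar).comp hacc
  have hlb : ∀ k, f θstar ≤ f (θseq k) := by
    intro k
    refine le_of_tendsto husub ?_
    filter_upwards [Filter.eventually_ge_atTop k] with m hm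
    exact hant (hm.trans hφ.le_apply)
  have hbdd : BddBelow (Set.range fun k => f (θseq k)) :=
    ⟨f θstar, by rintro x ⟨k, rfl⟩; exact hlb k⟩
  have hciInf := tendsto_atTop_ciInf hant hbdd
  have heq : (⨅ k, f (θseq k)) = f θstar :=
    tendsto_nhds_unique (hciInf.comp hφ.tendsto_atTop) husub
  have hclim : Tendsto (fun k => f (θseq k)) atTop (nhds (f θstar)) := heq ▸ hciInf
  -- the key step lemma
  have STEP : ∀ (t : Fin d) (ψ : ℕ → ℕ), Tendsto ψ atTop atTop →
      (∀ k, ψ k % d = t.val) →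
      Tendsto (fun k => θseq (ψ k)) atTop (nhds θstar) →
      (∀ u, f θstar ≤ f (Function.update θstar t u)) ∧
        Tendsto (fun k => θseq (ψ k + 1)) atTop (nhds θstar) := by
    intro t ψ hψ hmod hconv
    have hfin : ∀ k, (⟨ψ k % d, Nat.mod_lt (ψ k) hd⟩ : Fin d) = t :=
      fun k => Fin.ext (hmod k)
    have hG : Continuous (fun p : (Fin d → Fin q → ℝ) × (Fin q → ℝ) =>
        f (Function.update p.1 t p.2)) := hf_cont.comp (bcd_continuous_update t)
    have hGlim : ∀ (a : ℕ → Fin d → Fin q → ℝ) (b : ℕ → Fin q → ℝ) (b' : Fin q → ℝ),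
        Tendsto a atTop (nhds θstar) → Tendsto b atTop (nhds b') →
        Tendsto (fun k => f (Function.update (a k) t (b k))) atTop
          (nhds (f (Function.update θstar t b'))) := by
      intro a b b' ha hb
      exact (hG.tendsto (θstar, b')).comp (ha.prodMk_nhds hb)
    have hψ1 : Tendsto (fun k => ψ k + 1) atTop atTop :=
      tendsto_atTop_mono (fun k => Nat.le_succ (ψ k)) hψ
    have parta : ∀ u, f θstar ≤ f (Function.update θstar t u) := by
      intro u
      have hle : ∀ k, f (θseq (ψ k + 1)) ≤ f (Function.update (θseq (ψ k)) t u) := by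
        intro k
        have h2 := (hstep (ψ k)).2 u
        rwa [hfin k] at h2
      exact le_of_tendsto_of_tendsto' (hclim.comp hψ1)
        (hGlim _ _ _ hconv tendsto_const_nhds) hle
    have hmin_self : ∀ u,
        f (Function.update θstar t (θstar t)) ≤ f (Function.update θstar t u) := by
      intro u; rw [Function.update_eq_self]; exact parta u
    obtain ⟨z, _, hzu⟩ := huniq θstar t
    have huniq_at : ∀ w, (∀ u, f (Function.update θstar t w) ≤
        f (Function.update θstar t u)) → w = θstar t := by
      intro w hw
      rw [hzu w hw, hzu (θstar t) hmin_self]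
    refine ⟨parta, ?_⟩
    have hvup : ∀ k, θseq (ψ k + 1)
        = Function.update (θseq (ψ k)) t (θseq (ψ k + 1) t) := by
      intro k
      have h1 := (hstep (ψ k)).1
      rwa [hfin k] at h1
    set v : ℕ → Fin q → ℝ := fun k => θseq (ψ k + 1) t with hvdef
    have hvmin : ∀ k u, f (Function.update (θseq (ψ k)) t (v k))
        ≤ f (Function.update (θseq (ψ k)) t u) := by
      intro k u
      have h2 := (hstep (ψ k)).2 u
      rw [hfin k, hvup k] at h2
      exact h2
    -- eventual boundedness of the new block values
    have hbd : ∀ᶠ k in atTop, ‖v k - θstar t‖ < 1 := by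
      by_contra hcon
      have hfreq : ∃ᶠ k in atTop, 1 ≤ ‖v k - θstar t‖ := by
        rw [Filter.not_eventually] at hcon
        exact hcon.mono fun k hk => not_lt.mp hk
      obtain ⟨σ, hσ, hσ1⟩ := Filter.extraction_of_frequently_atTop hfreq
      set w : ℕ → Fin q → ℝ :=
        fun j => θstar t + ‖v (σ j) - θstar t‖⁻¹ • (v (σ j) - θstar t) with hwdef
      have hwsph : ∀ j, ‖w j - θstar t‖ = 1 := by
        intro j
        have h0 : (0:ℝ) < ‖v (σ j) - θstar t‖ := lt_of_lt_of_le one_pos (hσ1 j)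
        rw [hwdef]
        simp only [add_sub_cancel_left, norm_smul, Real.norm_eq_abs,
          abs_of_nonneg (inv_nonneg.mpr h0.le)]
        exact inv_mul_cancel₀ h0.ne'
      obtain ⟨wbar, hwbar_mem, ρ, hρ, hwlim⟩ :=
        (isCompact_sphere (θstar t) (1:ℝ)).tendsto_subseq (x := w)
          (fun j => by simpa [Metric.mem_sphere, dist_eq_norm] using hwsph j)
      have hkey : ∀ j, f (Function.update (θseq (ψ (σ j))) t (w j))
          ≤ f (Function.update (θseq (ψ (σ j))) t (θstar t)) := by
        intro j
        have h0 : (0:ℝ) < ‖v (σ j) - θstar t‖ := lt_of_lt_of_le one_pos (hσ1 j)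
        set s : ℝ := ‖v (σ j) - θstar t‖⁻¹ with hsdef
        have hs0 : 0 < s := inv_pos.mpr h0
        have hs1 : s ≤ 1 := by
          have hmul : s * ‖v (σ j) - θstar t‖ = 1 := inv_mul_cancel₀ h0.ne'
          nlinarith [hσ1 j, hs0.le]
        have hab : (1 - s) + s = 1 := by ring
        have hwcomb : w j = (1 - s) • θstar t + s • v (σ j) := by
          rw [hwdef]
          simp only []
          rw [sub_smul, one_smul, smul_sub]
          abel
        have hcvx := hf_conv.2
          (Set.mem_univ (Function.update (θseq (ψ (σ j))) t (θstar t)))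
          (Set.mem_univ (Function.update (θseq (ψ (σ j))) t (v (σ j))))
          (by linarith : (0:ℝ) ≤ 1 - s) hs0.le hab
        rw [← bcd_update_comb (θseq (ψ (σ j))) t _ _ hab, ← hwcomb] at hcvx
        have hm := hvmin (σ j) (θstar t)
        calc f (Function.update (θseq (ψ (σ j))) t (w j))
            ≤ (1 - s) * f (Function.update (θseq (ψ (σ j))) t (θstar t))
              + s * f (Function.update (θseq (ψ (σ j))) t (v (σ j))) := hcvx
          _ ≤ (1 - s) * f (Function.update (θseq (ψ (σ j))) t (θstar t))
              + s * f (Function.update (θseq (ψ (σ j))) t (θstar t)) := by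
                nlinarith [hm, hs0.le]
          _ = f (Function.update (θseq (ψ (σ j))) t (θstar t)) := by ring
      have hθρ : Tendsto (fun j => θseq (ψ (σ (ρ j)))) atTop (nhds θstar) :=
        hconv.comp (hσ.comp hρ).tendsto_atTop
      have hl1 : Tendsto (fun j => f (Function.update (θseq (ψ (σ (ρ j)))) t (w (ρ j))))
          atTop (nhds (f (Function.update θstar t wbar))) :=
        hGlim _ _ _ hθρ hwlim
      have hl2 : Tendsto (fun j => f (Function.update (θseq (ψ (σ (ρ j)))) t (θstar t)))
          atTop (nhds (f θstar)) := by
        have := hGlim (fun j => θseq (ψ (σ (ρ j)))) (fun _ => θstar t) (θstar t)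
          hθρ tendsto_const_nhds
        rwa [Function.update_eq_self] at this
      have hle := le_of_tendsto_of_tendsto' hl1 hl2 (fun j => hkey (ρ j))
      have hwbar_min : ∀ u, f (Function.update θstar t wbar)
          ≤ f (Function.update θstar t u) := fun u => hle.trans (parta u)
      have hwbar_eq := huniq_at wbar hwbar_min
      have hws : dist wbar (θstar t) = 1 := by
        simpa [Metric.mem_sphere, dist_eq_norm] using hwbar_mem
      rw [hwbar_eq] at hws
      simp at hws
    -- convergence of the new block values
    have hvlim : Tendsto v atTop (nhds (θstar t)) := by
      apply Filter.tendsto_of_subseq_tendsto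
      intro ns hns
      have hfreq : ∃ᶠ n in atTop, v (ns n) ∈ Metric.closedBall (θstar t) 1 := by
        refine (hns.eventually hbd).frequently.mono fun n hn => ?_
        rw [Metric.mem_closedBall, dist_eq_norm]
        exact hn.le
      obtain ⟨vbar, _, ρ, hρ, hvρ⟩ :=
        (isCompact_closedBall (θstar t) 1).tendsto_subseq' hfreq
      have hθρ : Tendsto (fun j => θseq (ψ (ns (ρ j)))) atTop (nhds θstar) :=
        hconv.comp (hns.comp hρ.tendsto_atTop)
      have hvρ' : Tendsto (fun j => v (ns (ρ j))) atTop (nhds vbar) := hvρ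
      have hvbar_min : ∀ u, f (Function.update θstar t vbar)
          ≤ f (Function.update θstar t u) := by
        intro u
        exact le_of_tendsto_of_tendsto' (hGlim _ _ _ hθρ hvρ')
          (hGlim (fun j => θseq (ψ (ns (ρ j)))) (fun _ => u) u hθρ tendsto_const_nhds)
          (fun j => hvmin (ns (ρ j)) u)
      rw [huniq_at vbar hvbar_min] at hvρ'
      exact ⟨ρ, hvρ'⟩
    -- conclude convergence of the next iterates
    have hfinal : Tendsto (fun k => Function.update (θseq (ψ k)) t (v k)) atTop
        (nhds (Function.update θstar t (θstar t))) :=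
      ((bcd_continuous_update t).tendsto (θstar, θstar t)).comp (hconv.prodMk_nhds hvlim)
    rw [Function.update_eq_self] at hfinal
    have heqfun : (fun k => θseq (ψ k + 1))
        = fun k => Function.update (θseq (ψ k)) t (v k) := funext hvup
    rw [heqfun]
    exact hfinal
  -- lemma: convergence propagates to the next iterate
  have NEXT : ∀ ψ : ℕ → ℕ, Tendsto ψ atTop atTop →
      Tendsto (fun k => θseq (ψ k)) atTop (nhds θstar) →
      Tendsto (fun k => θseq (ψ k + 1)) atTop (nhds θstar) := by
    intro ψ hψ hconv
    apply Filter.tendsto_of_subseq_tendsto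
    intro ns hns
    obtain ⟨r, hr⟩ := bcd_pigeon hd (fun n => (⟨ψ (ns n) % d, Nat.mod_lt _ hd⟩ : Fin d))
    obtain ⟨σ, hσ, hσr⟩ := Filter.extraction_of_frequently_atTop hr
    have hmod : ∀ j, ψ (ns (σ j)) % d = r.val := by
      intro j
      have := hσr j
      exact congrArg Fin.val this
    have hstep2 := STEP r (fun j => ψ (ns (σ j)))
      (hψ.comp (hns.comp hσ.tendsto_atTop)) hmod
      (hconv.comp (hns.comp hσ.tendsto_atTop))
    exact ⟨σ, hstep2.2⟩
  -- all shifted subsequences converge to θstar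
  have hall : ∀ j, Tendsto (fun k => θseq (φ k + j)) atTop (nhds θstar) := by
    intro j
    induction j with
    | zero => simpa using hacc
    | succ j ih =>
      have := NEXT (fun k => φ k + j)
        (tendsto_atTop_mono (fun k => Nat.le_add_right (φ k) j) hφ.tendsto_atTop) ih
      simpa [Nat.add_assoc] using this
  -- final pigeonhole over blocks
  intro t v
  obtain ⟨j, hj⟩ := bcd_pigeon hd
    (fun k => (⟨(t.val + d - φ k % d) % d, Nat.mod_lt _ hd⟩ : Fin d))
  obtain ⟨σ, hσ, hσj⟩ := Filter.extraction_of_frequently_atTop hj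
  have hmod : ∀ i, (φ (σ i) + j.val) % d = t.val := by
    intro i
    have hv : j.val = (t.val + d - φ (σ i) % d) % d :=
      (congrArg Fin.val (hσj i)).symm
    rw [hv]
    exact bcd_mod_arith (φ (σ i)) t.val d hd t.isLt
  have hstep3 := STEP t (fun i => φ (σ i) + j.val)
    (tendsto_atTop_mono (fun i => Nat.le_add_right (φ (σ i)) j.val) (hφ.tendsto_atTop.comp hσ.tendsto_atTop))
    hmod ((hall j.val).comp hσ.tendsto_atTop)
  exact hstep3.1 v
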